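/- Let a, b be continuous on [t₀,∞) with a(t) ≥ 0. Suppose x₁ and x₂ are two solutions of the Riccati equation x' + a(t)x² + b(t)x + c(t) = 0 on [t₂,∞) with λ = x₁(t₂) - x₂(t₂). Then for all t ≥ t₂ where 1 + λ·μ(t) ≠ 0: x₁(t) = x₂(t) + λ·exp(-∫_{t₂}^t (2a(τ)x₂(τ)+b(τ))dτ) / (1 + λ·μ(t)), where μ(t) = ∫_{t₂}^t a(τ)·exp(-∫_{t₂}^τ (2a(s)x₂(s)+b(s))ds)dτ. -/

import Mathlib

open Set Real

/-- FTC helper: right derivative of a primitive within `Ici`. -/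
lemma ftc_right_aux {t₂ T : ℝ} (f : ℝ → ℝ) (hf : ContinuousOn f (Icc t₂ T))
    {τ : ℝ} (hτ : τ ∈ Ico t₂ T) :
    HasDerivWithinAt (fun u => ∫ s in t₂..u, f s) (f τ) (Ici τ) τ := by
  have hmem : Icc t₂ T ∈ nhdsWithin τ (Ici τ) := by
    rw [mem_nhdsWithin]
    exact ⟨Iio T, isOpen_Iio, hτ.2, fun x hx => ⟨hτ.1.trans hx.2, hx.1.le⟩⟩
  have hmem' : Icc t₂ T ∈ nhdsWithin τ (Ioi τ) :=
    nhdsWithin_mono τ Ioi_subset_Ici_self hmem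
  refine intervalIntegral.integral_hasDerivWithinAt_right ?_
    ⟨Icc t₂ T, hmem', hf.aestronglyMeasurable measurableSet_Icc⟩ ?_
  · apply ContinuousOn.intervalIntegrable
    apply hf.mono
    rw [uIcc_of_le hτ.1]
    exact Icc_subset_Icc_right hτ.2.le
  · exact ((hf τ ⟨hτ.1, hτ.2.le⟩).mono_of_mem_nhdsWithin hmem).mono Ioi_subset_Ici_self

/-- Abstract Grönwall step: if `X·E·(1+c·M)` satisfies the linear ODE with coefficient
`-(A·X)` and equals `c` at `t₂`, it is constantly `c`. -/
lemma gronwall_aux (t₂ T : ℝ) (hT : t₂ ≤ T) (A X E M : ℝ → ℝ) (c : ℝ)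
    (hc : X t₂ * E t₂ * (1 + c * M t₂) = c)
    (hcontA : ContinuousOn A (Icc t₂ T)) (hcontX : ContinuousOn X (Icc t₂ T))
    (hcontE : ContinuousOn E (Icc t₂ T)) (hcontM : ContinuousOn M (Icc t₂ T))
    (hd : ∀ τ ∈ Ico t₂ T, HasDerivWithinAt (fun u => X u * E u * (1 + c * M u))
      (-(A τ * X τ) * (X τ * E τ * (1 + c * M τ) - c)) (Ici τ) τ) :
    X T * E T * (1 + c * M T) = c := by
  set f : ℝ → ℝ := fun u => X u * E u * (1 + c * M u) - c with hfdef
  have hcontf : ContinuousOn f (Icc t₂ T) :=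
    ((hcontX.mul hcontE).mul (continuousOn_const.add (continuousOn_const.mul hcontM))).sub
      continuousOn_const
  have hf' : ∀ τ ∈ Ico t₂ T,
      HasDerivWithinAt f (-(A τ * X τ) * f τ) (Ici τ) τ := by
    intro τ hτ
    exact (hd τ hτ).sub_const c
  obtain ⟨K, hK⟩ := IsCompact.exists_bound_of_continuousOn isCompact_Icc
    ((hcontA.mul hcontX).neg)
  have hbound : ∀ τ ∈ Ico t₂ T, ‖-(A τ * X τ) * f τ‖ ≤ K * ‖f τ‖ + 0 := by
    intro τ hτ
    rw [norm_mul, add_zero]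
    exact mul_le_mul_of_nonneg_right (hK τ (Ico_subset_Icc_self hτ)) (norm_nonneg _)
  have h0 : ‖f t₂‖ ≤ 0 := by
    simp only [hfdef, hc, sub_self, norm_zero, le_refl]
  have := norm_le_gronwallBound_of_norm_deriv_right_le hcontf hf' h0 hbound T
    ⟨hT, le_rfl⟩
  rw [gronwallBound_ε0, zero_mul] at this
  have hfT : f T = 0 := by
    have := norm_le_zero_iff.mp (le_trans this le_rfl)
    exact this
  have : X T * E T * (1 + c * M T) - c = 0 := hfT
  linarith

theorem stmt19 (t₀ t₂ : ℝ) (ht : t₀ ≤ t₂) (a b c x₁ x₂ : ℝ → ℝ)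
    (ha : ContinuousOn a (Ici t₀)) (hb : ContinuousOn b (Ici t₀))
    (hc : ContinuousOn c (Ici t₀))
    (ha0 : ∀ t ≥ t₀, 0 ≤ a t)
    (hx₁ : ∀ t ≥ t₂, HasDerivAt x₁ (-(a t * x₁ t ^ 2 + b t * x₁ t + c t)) t)
    (hx₂ : ∀ t ≥ t₂, HasDerivAt x₂ (-(a t * x₂ t ^ 2 + b t * x₂ t + c t)) t)
    (l : ℝ) (hl : l = x₁ t₂ - x₂ t₂)
    (μ : ℝ → ℝ)
    (hμ : μ = fun t => ∫ τ in t₂..t,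
      a τ * Real.exp (-∫ s in t₂..τ, 2 * a s * x₂ s + b s)) :
    ∀ t ≥ t₂, 1 + l * μ t ≠ 0 →
      x₁ t = x₂ t +
        l * Real.exp (-∫ τ in t₂..t, 2 * a τ * x₂ τ + b τ) / (1 + l * μ t) := by
  intro T hT hden
  have hsub : Icc t₂ T ⊆ Ici t₀ := fun x hx => le_trans ht (le_trans hx.1 le_rfl)
  -- continuities
  have hx2c : ContinuousOn x₂ (Icc t₂ T) := fun τ hτ =>
    ((hx₂ τ hτ.1).continuousAt).continuousWithinAt
  have hx1c : ContinuousOn x₁ (Icc t₂ T) := fun τ hτ =>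
    ((hx₁ τ hτ.1).continuousAt).continuousWithinAt
  have hac : ContinuousOn a (Icc t₂ T) := ha.mono hsub
  have hbc : ContinuousOn b (Icc t₂ T) := hb.mono hsub
  have hGc : ContinuousOn (fun s => 2 * a s * x₂ s + b s) (Icc t₂ T) :=
    ((continuousOn_const.mul hac).mul hx2c).add hbc
  have hIcont : ContinuousOn (fun u => ∫ s in t₂..u, 2 * a s * x₂ s + b s) (Icc t₂ T) := by
    have hint : MeasureTheory.IntegrableOn (fun s => 2 * a s * x₂ s + b s) (uIcc t₂ T) := by
      rw [uIcc_of_le hT]; exact hGc.integrableOn_Icc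
    have h2 := intervalIntegral.continuousOn_primitive_interval hint
    rwa [uIcc_of_le hT] at h2
  have hEc : ContinuousOn (fun u => Real.exp (∫ s in t₂..u, 2 * a s * x₂ s + b s))
      (Icc t₂ T) := Real.continuous_exp.comp_continuousOn hIcont
  have hmc : ContinuousOn
      (fun τ => a τ * Real.exp (-∫ s in t₂..τ, 2 * a s * x₂ s + b s)) (Icc t₂ T) :=
    hac.mul (Real.continuous_exp.comp_continuousOn hIcont.neg)
  have hμcont : ContinuousOn μ (Icc t₂ T) := by
    rw [hμ]
    have hint : MeasureTheory.IntegrableOn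
        (fun τ => a τ * Real.exp (-∫ s in t₂..τ, 2 * a s * x₂ s + b s)) (uIcc t₂ T) := by
      rw [uIcc_of_le hT]; exact hmc.integrableOn_Icc
    have h2 := intervalIntegral.continuousOn_primitive_interval hint
    rwa [uIcc_of_le hT] at h2
  -- key identity via Grönwall
  have key := gronwall_aux t₂ T hT a (fun u => x₁ u - x₂ u)
    (fun u => Real.exp (∫ s in t₂..u, 2 * a s * x₂ s + b s)) μ l
    (by simp [intervalIntegral.integral_same, hμ, hl])
    hac (hx1c.sub hx2c) hEc hμcont ?_
  · -- conclude the formula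
    rw [Real.exp_neg]
    have he : Real.exp (∫ τ in t₂..T, 2 * a τ * x₂ τ + b τ) ≠ 0 := Real.exp_ne_zero _
    field_simp
    linear_combination key
  · intro τ hτ
    have hτ2 : t₂ ≤ τ := hτ.1
    have hI : HasDerivWithinAt (fun u => ∫ s in t₂..u, 2 * a s * x₂ s + b s)
        (2 * a τ * x₂ τ + b τ) (Ici τ) τ := ftc_right_aux _ hGc hτ
    have hE := hI.exp
    have hM : HasDerivWithinAt μ
        (a τ * Real.exp (-∫ s in t₂..τ, 2 * a s * x₂ s + b s)) (Ici τ) τ := by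
      rw [hμ]
      exact ftc_right_aux _ hmc hτ
    have hX : HasDerivWithinAt (fun u => x₁ u - x₂ u)
        ((-(a τ * x₁ τ ^ 2 + b τ * x₁ τ + c τ)) - (-(a τ * x₂ τ ^ 2 + b τ * x₂ τ + c τ)))
        (Ici τ) τ := ((hx₁ τ hτ2).sub (hx₂ τ hτ2)).hasDerivWithinAt
    have hprod := (hX.mul hE).mul ((hM.const_mul l).const_add 1)
    convert hprod using 1
    · rfl
    · rfl
    · rfl
    rw [Real.exp_neg]
    have he : Real.exp (∫ s in t₂..τ, 2 * a s * x₂ s + b s) ≠ 0 := Real.exp_ne_zero _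
    field_simp
    simp only [Pi.mul_apply]
    ring
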